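/- Suppose κ is a regular uncountable cardinal, ν ≤ κ is an infinite cardinal, and there is an upper-regressive colouring c : [κ]² → θ such that for every cofinal B ⊆ κ there exists η < ν with otp(c[{η} ⊛ B]) = θ. Then θ ≤ κ, and if ν < cf(θ) then θ = κ. -/

import Mathlib

open Cardinal Ordinal Set

/-- The order type of a set of ordinals. -/
noncomputable def otp (S : Set Ordinal.{0}) : Ordinal.{1} :=
  @Ordinal.type S (Subrel (· < ·) S)
    (RelEmbedding.isWellOrder (Subrel.relEmbedding (· < ·) S))

lemma otp_le_of_subset_Iio {S : Set Ordinal.{0}} {γ : Ordinal.{0}} (h : S ⊆ Set.Iio γ) :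
    otp S ≤ Ordinal.lift.{1} γ := by
  letI : IsWellOrder γ.ToType ((· < ·) : γ.ToType → γ.ToType → Prop) := isWellOrder_lt
  letI : IsWellOrder S (Subrel (· < ·) S) :=
    RelEmbedding.isWellOrder (Subrel.relEmbedding (· < ·) S)
  calc otp S ≤ Ordinal.type (ULift.down.{1} ⁻¹'o ((· < ·) : γ.ToType → γ.ToType → Prop)) :=
        (RelEmbedding.ofMonotone
          (fun x => ULift.up (Ordinal.ToType.mk ⟨x.1, h x.2⟩))
          (fun a b hab => by simpa [Subrel] using hab)).ordinal_type_le
    _ = Ordinal.lift.{1} (Ordinal.type ((· < ·) : γ.ToType → γ.ToType → Prop)) :=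
        Ordinal.type_uLift ((· < ·) : γ.ToType → γ.ToType → Prop)
    _ = Ordinal.lift.{1} γ := by rw [Ordinal.type_toType]

theorem stmt_0 (κ ν θ : Cardinal)
    (hκreg : κ.IsRegular) (hκunc : ℵ₀ < κ)
    (hν : ℵ₀ ≤ ν) (hνκ : ν ≤ κ) (hθ : 2 ≤ θ)
    (c : Ordinal → Ordinal → Ordinal)
    (hcθ : ∀ α β : Ordinal, α < β → β < κ.ord → c α β < θ.ord)
    (hcreg : ∀ α β : Ordinal, α < β → β < κ.ord → c α β < β)
    (hwit : ∀ B : Set Ordinal, B ⊆ Set.Iio κ.ord →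
      (∀ α < κ.ord, ∃ β ∈ B, α ≤ β) →
      ∃ η < ν.ord, otp {x : Ordinal | ∃ β ∈ B, η < β ∧ c η β = x} =
        Ordinal.lift.{1} θ.ord) :
    θ ≤ κ ∧ (ν < (θ.ord).cof → θ = κ) := by
  have hθκ : θ ≤ κ := by
    obtain ⟨η, hη, hotp⟩ := hwit (Set.Iio κ.ord) le_rfl
      (fun α hα => ⟨α, hα, le_rfl⟩)
    have hsub : {x : Ordinal | ∃ β ∈ Set.Iio κ.ord, η < β ∧ c η β = x} ⊆ Set.Iio κ.ord := by
      rintro x ⟨β, hβ, hηβ, rfl⟩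
      exact lt_trans (hcreg η β hηβ hβ) hβ
    have := (otp_le_of_subset_Iio hsub)
    rw [hotp, Ordinal.lift_le] at this
    rwa [← Cardinal.ord_le_ord]
  refine ⟨hθκ, fun hcf => ?_⟩
  by_contra hne
  have hlt : θ < κ := lt_of_le_of_ne hθκ hne
  have hθν : ν < θ := hcf.trans_le (Ordinal.cof_ord_le θ)
  have hθinf : ℵ₀ ≤ θ := hν.trans hθν.le
  have hlim : Order.IsSuccLimit (θ.ord) := Cardinal.isSuccLimit_ord hθinf
  set h : Ordinal → Ordinal := fun β => Ordinal.bsup ν.ord (fun η _ => Order.succ (c η β))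
    with hh_def
  have hh : ∀ β, ν.ord ≤ β → β < κ.ord → h β < θ.ord := by
    intro β hβ1 hβ2
    refine Ordinal.bsup_lt_ord (by rw [Cardinal.card_ord]; exact hcf) ?_
    intro η hη
    exact hlim.succ_lt (hcθ η β (hη.trans_le hβ1) hβ2)
  have hνκ' : ν.ord < κ.ord := Cardinal.ord_lt_ord.2 (hθν.trans_le hθκ)
  have key : ∃ δ < θ.ord, ∀ α < κ.ord, ∃ β, β < κ.ord ∧ ν.ord ≤ β ∧ α ≤ β ∧ h β = δ := by
    by_contra hk
    push_neg at hk
    choose g hg1 hg2 using hk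
    have hA : Ordinal.bsup θ.ord g < κ.ord := by
      refine Ordinal.bsup_lt_ord ?_ hg1
      rw [Cardinal.card_ord, hκreg.cof_eq]
      exact hlt
    set β0 : Ordinal := max (Ordinal.bsup θ.ord g) ν.ord with hβ0_def
    have hβ0 : β0 < κ.ord := max_lt hA hνκ'
    have hδ : h β0 < θ.ord := hh β0 (le_max_right _ _) hβ0
    exact hg2 (h β0) hδ β0 hβ0 (le_max_right _ _)
      ((Ordinal.le_bsup g (h β0) hδ).trans (le_max_left _ _)) rfl
  obtain ⟨δ, hδ, hB⟩ := key
  set B : Set Ordinal := {β | β < κ.ord ∧ ν.ord ≤ β ∧ h β = δ} with hB_def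
  obtain ⟨η, hη, hotp⟩ := hwit B (fun β hβ => hβ.1)
    (fun α hα => by
      obtain ⟨β, h1, h2, h3, h4⟩ := hB α hα
      exact ⟨β, ⟨h1, h2, h4⟩, h3⟩)
  have hsub : {x : Ordinal | ∃ β ∈ B, η < β ∧ c η β = x} ⊆ Set.Iio δ := by
    rintro x ⟨β, ⟨hβκ, hβν, hβh⟩, hηβ, rfl⟩
    have : Order.succ (c η β) ≤ h β := Ordinal.le_bsup _ η hη
    rw [hβh] at this
    exact lt_of_lt_of_le (Order.lt_succ _) this
  have h1 := otp_le_of_subset_Iio hsub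
  rw [hotp] at h1
  exact absurd h1 (not_le.2 (Ordinal.lift_lt.2 hδ))
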